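/- Let H ⊆ ℂ be open and connected, t : H → ℂ twice differentiable, τ₂, τ₃ : H → ℂ differentiable with τ₂' = -t and τ₃' = t², and T(τ) = [[τ, τ₂],[τ₂, τ₃]]. Let γ = [[A,B],[C,D]] ∈ Sp₄(ℝ) and σ : H → H differentiable with C·T(τ)+D invertible and T(σ(τ)) = (A·T(τ)+B)·(C·T(τ)+D)⁻¹ for all τ. Write C·T(τ)+D = [[𝔞,𝔟],[𝔠,𝔡]] and assume 𝔠·t+𝔡 ≠ 0 on H. Then the function v = dt/dτ satisfies v(σ(τ)) = (det(C·T(τ)+D)³ / (𝔠·t(τ)+𝔡)⁴)·v(τ) for all τ ∈ H. -/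

import Mathlib

open Matrix

/-- Coerce a real `2×2` matrix to a complex one. -/
def matC (A : Matrix (Fin 2) (Fin 2) ℝ) : Matrix (Fin 2) (Fin 2) ℂ :=
  A.map (fun x => (x : ℂ))

/-- The standard symplectic form matrix `J = [[0, -E], [E, 0]]` in `2×2` blocks, over `ℝ`. -/
def J2R : Matrix (Fin 2 ⊕ Fin 2) (Fin 2 ⊕ Fin 2) ℝ :=
  Matrix.fromBlocks 0 (-1) 1 0

/-- The symmetric matrix curve `T(τ) = [[τ, τ₂(τ)],[τ₂(τ), τ₃(τ)]]`. -/
def Tcurve (τ2 τ3 : ℂ → ℂ) : ℂ → Matrix (Fin 2) (Fin 2) ℂ :=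
  fun τ => !![τ, τ2 τ; τ2 τ, τ3 τ]

/-- first-column entries of `C·T+D`. -/
def rowF (C D : Matrix (Fin 2) (Fin 2) ℝ) (τ2 : ℂ → ℂ) (i : Fin 2) (x : ℂ) : ℂ :=
  (C i 0 : ℂ) * x + (C i 1 : ℂ) * τ2 x + (D i 0 : ℂ)

/-- second-column entries of `C·T+D`. -/
def rowG (C D : Matrix (Fin 2) (Fin 2) ℝ) (τ2 τ3 : ℂ → ℂ) (i : Fin 2) (x : ℂ) : ℂ :=
  (C i 0 : ℂ) * τ2 x + (C i 1 : ℂ) * τ3 x + (D i 1 : ℂ)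

lemma Mblock (C D : Matrix (Fin 2) (Fin 2) ℝ) (τ2 τ3 : ℂ → ℂ) (x : ℂ) :
    matC C * Tcurve τ2 τ3 x + matC D =
      !![rowF C D τ2 0 x, rowG C D τ2 τ3 0 x; rowF C D τ2 1 x, rowG C D τ2 τ3 1 x] := by
  ext i j
  fin_cases i <;> fin_cases j <;>
    simp [matC, Tcurve, rowF, rowG, Matrix.mul_apply, Fin.sum_univ_two]

lemma Mdet (C D : Matrix (Fin 2) (Fin 2) ℝ) (τ2 τ3 : ℂ → ℂ) (x : ℂ) :
    (matC C * Tcurve τ2 τ3 x + matC D).det =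
      rowF C D τ2 0 x * rowG C D τ2 τ3 1 x - rowG C D τ2 τ3 0 x * rowF C D τ2 1 x := by
  rw [Mblock]; simp [Matrix.det_fin_two_of]

lemma hasDeriv_rowF (C D : Matrix (Fin 2) (Fin 2) ℝ) (τ2 t : ℂ → ℂ) (i : Fin 2) (x : ℂ)
    (h2 : HasDerivAt τ2 (-(t x)) x) :
    HasDerivAt (rowF C D τ2 i) ((C i 0 : ℂ) + (C i 1 : ℂ) * (-(t x))) x := by
  have h := (((hasDerivAt_id x).const_mul ((C i 0 : ℂ))).add
    (h2.const_mul ((C i 1 : ℂ)))).add_const ((D i 0 : ℂ))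
  unfold rowF
  simpa [rowF, mul_one] using h

lemma hasDeriv_rowG (C D : Matrix (Fin 2) (Fin 2) ℝ) (τ2 τ3 t : ℂ → ℂ) (i : Fin 2) (x : ℂ)
    (h2 : HasDerivAt τ2 (-(t x)) x) (h3 : HasDerivAt τ3 ((t x) ^ 2) x) :
    HasDerivAt (rowG C D τ2 τ3 i) ((C i 0 : ℂ) * (-(t x)) + (C i 1 : ℂ) * (t x) ^ 2) x := by
  have h := ((h2.const_mul ((C i 0 : ℂ))).add (h3.const_mul ((C i 1 : ℂ)))).add_const
    ((D i 1 : ℂ))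
  unfold rowG
  simpa [rowG] using h

lemma deriv_unique_on {H : Set ℂ} (hH : IsOpen H) {f g : ℂ → ℂ} {x : ℂ} (hx : x ∈ H)
    (hfg : ∀ y ∈ H, f y = g y) {a b : ℂ} (hf : HasDerivAt f a x) (hg : HasDerivAt g b x) :
    a = b := by
  have h : f =ᶠ[nhds x] g := Filter.eventuallyEq_of_mem (hH.mem_nhds hx) hfg
  exact (hf.congr_of_eventuallyEq h.symm).unique hg

theorem v_transformation
    (H : Set ℂ) (hH : IsOpen H) (hconn : IsConnected H)
    (t τ2 τ3 v : ℂ → ℂ)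
    (hv : ∀ τ ∈ H, HasDerivAt t (v τ) τ)
    (hv' : ∀ τ ∈ H, DifferentiableAt ℂ v τ)
    (hτ2 : ∀ τ ∈ H, HasDerivAt τ2 (-(t τ)) τ)
    (hτ3 : ∀ τ ∈ H, HasDerivAt τ3 ((t τ) ^ 2) τ)
    (A B C D : Matrix (Fin 2) (Fin 2) ℝ)
    (hsp : (Matrix.fromBlocks A B C D)ᵀ * J2R * Matrix.fromBlocks A B C D = J2R)
    (σ : ℂ → ℂ) (hσmap : Set.MapsTo σ H H)
    (hσdiff : ∀ τ ∈ H, DifferentiableAt ℂ σ τ)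
    (hinv : ∀ τ ∈ H, IsUnit (matC C * Tcurve τ2 τ3 τ + matC D))
    (heq : ∀ τ ∈ H, Tcurve τ2 τ3 (σ τ)
      = (matC A * Tcurve τ2 τ3 τ + matC B) * (matC C * Tcurve τ2 τ3 τ + matC D)⁻¹)
    (hcd : ∀ τ ∈ H,
      (matC C * Tcurve τ2 τ3 τ + matC D) 1 0 * t τ
        + (matC C * Tcurve τ2 τ3 τ + matC D) 1 1 ≠ 0) :
    ∀ τ ∈ H,
      v (σ τ)
        = ((matC C * Tcurve τ2 τ3 τ + matC D).det) ^ 3 /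
            ((matC C * Tcurve τ2 τ3 τ + matC D) 1 0 * t τ
              + (matC C * Tcurve τ2 τ3 τ + matC D) 1 1) ^ 4 * v τ := by
  -- real symplectic entry relations
  have r1 : C 0 0 * A 0 1 + C 1 0 * A 1 1 = C 0 1 * A 0 0 + C 1 1 * A 1 0 := by
    have h := congrFun (congrFun hsp (Sum.inl 0)) (Sum.inl 1)
    simp [J2R, Matrix.mul_apply, Matrix.fromBlocks, Fin.sum_univ_two, Matrix.transpose_apply,
      Fintype.sum_sum_type] at h
    linarith
  have r2 : D 0 0 * A 0 0 + D 1 0 * A 1 0 - (B 0 0 * C 0 0 + B 1 0 * C 1 0) = 1 := by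
    have h := congrFun (congrFun hsp (Sum.inr 0)) (Sum.inl 0)
    simp [J2R, Matrix.mul_apply, Matrix.fromBlocks, Fin.sum_univ_two, Matrix.transpose_apply,
      Fintype.sum_sum_type] at h
    linarith
  have r3 : D 0 0 * A 0 1 + D 1 0 * A 1 1 - (B 0 0 * C 0 1 + B 1 0 * C 1 1) = 0 := by
    have h := congrFun (congrFun hsp (Sum.inr 0)) (Sum.inl 1)
    simp [J2R, Matrix.mul_apply, Matrix.fromBlocks, Fin.sum_univ_two, Matrix.transpose_apply,
      Fintype.sum_sum_type] at h
    linarith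
  have r4 : D 0 1 * A 0 0 + D 1 1 * A 1 0 - (B 0 1 * C 0 0 + B 1 1 * C 1 0) = 0 := by
    have h := congrFun (congrFun hsp (Sum.inr 1)) (Sum.inl 0)
    simp [J2R, Matrix.mul_apply, Matrix.fromBlocks, Fin.sum_univ_two, Matrix.transpose_apply,
      Fintype.sum_sum_type] at h
    linarith
  have r5 : D 0 1 * A 0 1 + D 1 1 * A 1 1 - (B 0 1 * C 0 1 + B 1 1 * C 1 1) = 1 := by
    have h := congrFun (congrFun hsp (Sum.inr 1)) (Sum.inl 1)
    simp [J2R, Matrix.mul_apply, Matrix.fromBlocks, Fin.sum_univ_two, Matrix.transpose_apply,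
      Fintype.sum_sum_type] at h
    linarith
  -- complex casts
  have r1C : (C 0 0 : ℂ) * (A 0 1 : ℂ) + (C 1 0 : ℂ) * (A 1 1 : ℂ)
      = (C 0 1 : ℂ) * (A 0 0 : ℂ) + (C 1 1 : ℂ) * (A 1 0 : ℂ) := by exact_mod_cast r1
  have r2C : (D 0 0 : ℂ) * (A 0 0 : ℂ) + (D 1 0 : ℂ) * (A 1 0 : ℂ)
      - ((B 0 0 : ℂ) * (C 0 0 : ℂ) + (B 1 0 : ℂ) * (C 1 0 : ℂ)) = 1 := by
    exact_mod_cast r2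
  have r3C : (D 0 0 : ℂ) * (A 0 1 : ℂ) + (D 1 0 : ℂ) * (A 1 1 : ℂ)
      - ((B 0 0 : ℂ) * (C 0 1 : ℂ) + (B 1 0 : ℂ) * (C 1 1 : ℂ)) = 0 := by
    exact_mod_cast r3
  have r4C : (D 0 1 : ℂ) * (A 0 0 : ℂ) + (D 1 1 : ℂ) * (A 1 0 : ℂ)
      - ((B 0 1 : ℂ) * (C 0 0 : ℂ) + (B 1 1 : ℂ) * (C 1 0 : ℂ)) = 0 := by
    exact_mod_cast r4
  have r5C : (D 0 1 : ℂ) * (A 0 1 : ℂ) + (D 1 1 : ℂ) * (A 1 1 : ℂ)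
      - ((B 0 1 : ℂ) * (C 0 1 : ℂ) + (B 1 1 : ℂ) * (C 1 1 : ℂ)) = 1 := by
    exact_mod_cast r5
  -- the matrix curve equation, cleared of inverses
  have hTM : ∀ x ∈ H, Tcurve τ2 τ3 (σ x) * (matC C * Tcurve τ2 τ3 x + matC D)
      = matC A * Tcurve τ2 τ3 x + matC B := by
    intro x hx
    have hd := (Matrix.isUnit_iff_isUnit_det _).mp (hinv x hx)
    rw [heq x hx, Matrix.mul_assoc, Matrix.nonsing_inv_mul _ hd, Matrix.mul_one]
  -- scalar curve equations
  have e00 : ∀ x ∈ H, σ x * rowF C D τ2 0 x + τ2 (σ x) * rowF C D τ2 1 x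
      = rowF A B τ2 0 x := by
    intro x hx
    have h := congrFun (congrFun (hTM x hx) 0) 0
    rw [Mblock, Mblock] at h
    simpa [Tcurve, Matrix.mul_apply, Fin.sum_univ_two] using h
  have e01 : ∀ x ∈ H, σ x * rowG C D τ2 τ3 0 x + τ2 (σ x) * rowG C D τ2 τ3 1 x
      = rowG A B τ2 τ3 0 x := by
    intro x hx
    have h := congrFun (congrFun (hTM x hx) 0) 1
    rw [Mblock, Mblock] at h
    simpa [Tcurve, Matrix.mul_apply, Fin.sum_univ_two] using h
  have e10 : ∀ x ∈ H, τ2 (σ x) * rowF C D τ2 0 x + τ3 (σ x) * rowF C D τ2 1 x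
      = rowF A B τ2 1 x := by
    intro x hx
    have h := congrFun (congrFun (hTM x hx) 1) 0
    rw [Mblock, Mblock] at h
    simpa [Tcurve, Matrix.mul_apply, Fin.sum_univ_two] using h
  have e11 : ∀ x ∈ H, τ2 (σ x) * rowG C D τ2 τ3 0 x + τ3 (σ x) * rowG C D τ2 τ3 1 x
      = rowG A B τ2 τ3 1 x := by
    intro x hx
    have h := congrFun (congrFun (hTM x hx) 1) 1
    rw [Mblock, Mblock] at h
    simpa [Tcurve, Matrix.mul_apply, Fin.sum_univ_two] using h
  -- symplectic scalar identities
  have s1 : ∀ x ∈ H, rowF C D τ2 0 x * ((A 0 0 : ℂ) - σ x * (C 0 0 : ℂ) - τ2 (σ x) * (C 1 0 : ℂ))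
      + rowF C D τ2 1 x * ((A 1 0 : ℂ) - τ2 (σ x) * (C 0 0 : ℂ) - τ3 (σ x) * (C 1 0 : ℂ)) = 1 := by
    intro x hx
    have h1 := e00 x hx; have h2 := e10 x hx
    simp only [rowF] at h1 h2 ⊢
    linear_combination (-(C 0 0 : ℂ)) * h1 + (-(C 1 0 : ℂ)) * h2 + (-(τ2 x)) * r1C + r2C
  have s2 : ∀ x ∈ H, rowF C D τ2 0 x * ((A 0 1 : ℂ) - σ x * (C 0 1 : ℂ) - τ2 (σ x) * (C 1 1 : ℂ))
      + rowF C D τ2 1 x * ((A 1 1 : ℂ) - τ2 (σ x) * (C 0 1 : ℂ) - τ3 (σ x) * (C 1 1 : ℂ)) = 0 := by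
    intro x hx
    have h1 := e00 x hx; have h2 := e10 x hx
    simp only [rowF] at h1 h2 ⊢
    linear_combination (-(C 0 1 : ℂ)) * h1 + (-(C 1 1 : ℂ)) * h2 + x * r1C + r3C
  have s3 : ∀ x ∈ H, rowG C D τ2 τ3 0 x * ((A 0 0 : ℂ) - σ x * (C 0 0 : ℂ) - τ2 (σ x) * (C 1 0 : ℂ))
      + rowG C D τ2 τ3 1 x * ((A 1 0 : ℂ) - τ2 (σ x) * (C 0 0 : ℂ) - τ3 (σ x) * (C 1 0 : ℂ)) = 0 := by
    intro x hx
    have h1 := e01 x hx; have h2 := e11 x hx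
    simp only [rowF, rowG] at h1 h2 ⊢
    linear_combination (-(C 0 0 : ℂ)) * h1 + (-(C 1 0 : ℂ)) * h2 + (-(τ3 x)) * r1C + r4C
  have s4 : ∀ x ∈ H, rowG C D τ2 τ3 0 x * ((A 0 1 : ℂ) - σ x * (C 0 1 : ℂ) - τ2 (σ x) * (C 1 1 : ℂ))
      + rowG C D τ2 τ3 1 x * ((A 1 1 : ℂ) - τ2 (σ x) * (C 0 1 : ℂ) - τ3 (σ x) * (C 1 1 : ℂ)) = 1 := by
    intro x hx
    have h1 := e01 x hx; have h2 := e11 x hx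
    simp only [rowF, rowG] at h1 h2 ⊢
    linear_combination (-(C 0 1 : ℂ)) * h1 + (-(C 1 1 : ℂ)) * h2 + (τ2 x) * r1C + r5C
  -- derivative of the (0,0) curve equation
  have dI : ∀ x ∈ H,
      deriv σ x * rowF C D τ2 0 x + σ x * ((C 0 0 : ℂ) + (C 0 1 : ℂ) * (-(t x)))
        + (-(t (σ x)) * deriv σ x * rowF C D τ2 1 x
          + τ2 (σ x) * ((C 1 0 : ℂ) + (C 1 1 : ℂ) * (-(t x))))
      = (A 0 0 : ℂ) + (A 0 1 : ℂ) * (-(t x)) := by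
    intro x hx
    have hσ := (hσdiff x hx).hasDerivAt
    have hu2 : HasDerivAt (fun y => τ2 (σ y)) (-(t (σ x)) * deriv σ x) x :=
      (hτ2 (σ x) (hσmap hx)).comp x hσ
    have hL := (hσ.mul (hasDeriv_rowF C D τ2 t 0 x (hτ2 x hx))).add
      (hu2.mul (hasDeriv_rowF C D τ2 t 1 x (hτ2 x hx)))
    exact deriv_unique_on hH hx e00 hL (hasDeriv_rowF A B τ2 t 0 x (hτ2 x hx))
  -- derivative of the (1,0) curve equation
  have dIII : ∀ x ∈ H,
      -(t (σ x)) * deriv σ x * rowF C D τ2 0 x + τ2 (σ x) * ((C 0 0 : ℂ) + (C 0 1 : ℂ) * (-(t x)))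
        + ((t (σ x)) ^ 2 * deriv σ x * rowF C D τ2 1 x
          + τ3 (σ x) * ((C 1 0 : ℂ) + (C 1 1 : ℂ) * (-(t x))))
      = (A 1 0 : ℂ) + (A 1 1 : ℂ) * (-(t x)) := by
    intro x hx
    have hσ := (hσdiff x hx).hasDerivAt
    have hu2 : HasDerivAt (fun y => τ2 (σ y)) (-(t (σ x)) * deriv σ x) x :=
      (hτ2 (σ x) (hσmap hx)).comp x hσ
    have hu3 : HasDerivAt (fun y => τ3 (σ y)) ((t (σ x)) ^ 2 * deriv σ x) x :=
      (hτ3 (σ x) (hσmap hx)).comp x hσ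
    have hL := (hu2.mul (hasDeriv_rowF C D τ2 t 0 x (hτ2 x hx))).add
      (hu3.mul (hasDeriv_rowF C D τ2 t 1 x (hτ2 x hx)))
    exact deriv_unique_on hH hx e10 hL (hasDeriv_rowF A B τ2 t 1 x (hτ2 x hx))
  have E1 : ∀ x ∈ H,
      deriv σ x * (rowF C D τ2 0 x - t (σ x) * rowF C D τ2 1 x) ^ 2 = 1 := by
    intro x hx
    linear_combination (rowF C D τ2 0 x) * dI x hx + (rowF C D τ2 1 x) * dIII x hx
      + s1 x hx + (-(t x)) * s2 x hx
  have E2 : ∀ x ∈ H,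
      deriv σ x * (rowF C D τ2 0 x - t (σ x) * rowF C D τ2 1 x)
        * (rowG C D τ2 τ3 0 x - t (σ x) * rowG C D τ2 τ3 1 x) = -(t x) := by
    intro x hx
    linear_combination (rowG C D τ2 τ3 0 x) * dI x hx + (rowG C D τ2 τ3 1 x) * dIII x hx
      + s3 x hx + (-(t x)) * s4 x hx
  -- the fractional linear transformation law for t
  have FA : ∀ x ∈ H,
      t (σ x) * (rowF C D τ2 1 x * t x + rowG C D τ2 τ3 1 x)
        = rowF C D τ2 0 x * t x + rowG C D τ2 τ3 0 x := by
    intro x hx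
    linear_combination (rowG C D τ2 τ3 0 x - t (σ x) * rowG C D τ2 τ3 1 x) * E1 x hx
      + (-(rowF C D τ2 0 x - t (σ x) * rowF C D τ2 1 x)) * E2 x hx
  -- now fix the point
  intro τ0 h0
  have hσ := (hσdiff τ0 h0).hasDerivAt
  have L8 : deriv σ τ0 * (rowF C D τ2 0 τ0 * rowG C D τ2 τ3 1 τ0
        - rowG C D τ2 τ3 0 τ0 * rowF C D τ2 1 τ0) ^ 2
      = (rowF C D τ2 1 τ0 * t τ0 + rowG C D τ2 τ3 1 τ0) ^ 2 := by
    linear_combination (rowF C D τ2 1 τ0 * t τ0 + rowG C D τ2 τ3 1 τ0) ^ 2 * E1 τ0 h0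
      + (deriv σ τ0 * rowF C D τ2 1 τ0
          * ((rowF C D τ2 0 τ0 - t (σ τ0) * rowF C D τ2 1 τ0)
              * (rowF C D τ2 1 τ0 * t τ0 + rowG C D τ2 τ3 1 τ0)
            + (rowF C D τ2 0 τ0 * rowG C D τ2 τ3 1 τ0
              - rowG C D τ2 τ3 0 τ0 * rowF C D τ2 1 τ0))) * FA τ0 h0
  -- differentiate FA at τ0
  have htσ : HasDerivAt (fun y => t (σ y)) (v (σ τ0) * deriv σ τ0) τ0 :=
    (hv (σ τ0) (hσmap h0)).comp τ0 hσ
  have hL := htσ.mul (((hasDeriv_rowF C D τ2 t 1 τ0 (hτ2 τ0 h0)).mul (hv τ0 h0)).add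
    (hasDeriv_rowG C D τ2 τ3 t 1 τ0 (hτ2 τ0 h0) (hτ3 τ0 h0)))
  have hR := ((hasDeriv_rowF C D τ2 t 0 τ0 (hτ2 τ0 h0)).mul (hv τ0 h0)).add
    (hasDeriv_rowG C D τ2 τ3 t 0 τ0 (hτ2 τ0 h0) (hτ3 τ0 h0))
  have derivEq := deriv_unique_on hH h0 FA hL hR
  simp only [Pi.add_apply, Pi.mul_apply] at derivEq
  have key : v (σ τ0) * (rowF C D τ2 1 τ0 * t τ0 + rowG C D τ2 τ3 1 τ0) ^ 4
      = (rowF C D τ2 0 τ0 * rowG C D τ2 τ3 1 τ0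
          - rowG C D τ2 τ3 0 τ0 * rowF C D τ2 1 τ0) ^ 3 * v τ0 := by
    linear_combination (-(v (σ τ0)) * (rowF C D τ2 1 τ0 * t τ0 + rowG C D τ2 τ3 1 τ0) ^ 2) * L8
      + ((rowF C D τ2 0 τ0 * rowG C D τ2 τ3 1 τ0
          - rowG C D τ2 τ3 0 τ0 * rowF C D τ2 1 τ0) ^ 2
            * (rowF C D τ2 1 τ0 * t τ0 + rowG C D τ2 τ3 1 τ0)) * derivEq
      + (-(v τ0) * rowF C D τ2 1 τ0 * (rowF C D τ2 0 τ0 * rowG C D τ2 τ3 1 τ0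
          - rowG C D τ2 τ3 0 τ0 * rowF C D τ2 1 τ0) ^ 2) * FA τ0 h0
  -- convert the goal to rowF/rowG form
  have h10 : (matC C * Tcurve τ2 τ3 τ0 + matC D) 1 0 = rowF C D τ2 1 τ0 := by
    rw [Mblock]; simp
  have h11 : (matC C * Tcurve τ2 τ3 τ0 + matC D) 1 1 = rowG C D τ2 τ3 1 τ0 := by
    rw [Mblock]; simp
  have hg : rowF C D τ2 1 τ0 * t τ0 + rowG C D τ2 τ3 1 τ0 ≠ 0 := by
    have := hcd τ0 h0; rwa [h10, h11] at this
  have hdet : rowF C D τ2 0 τ0 * rowG C D τ2 τ3 1 τ0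
      - rowG C D τ2 τ3 0 τ0 * rowF C D τ2 1 τ0 ≠ 0 := by
    have hd := ((Matrix.isUnit_iff_isUnit_det _).mp (hinv τ0 h0)).ne_zero
    rwa [Mdet] at hd
  rw [Mdet, h10, h11]
  field_simp
  linear_combination key
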